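/- arXiv:1905.07119 — 5 statements merged into one kernel-verified Lean document; each statement's English description precedes it below -/
import Mathlib

section
/- Define the hyperfactorial H(n) = ∏_{k=0}^{n-1} k! for a positive integer n. Then for all positive integers a, b, c, the identity H(a+b) · H(b+c) · H(c+a) divides H(a) · H(b) · H(c) · H(a+b+c) in the sense that the quotient H(a)H(b)H(c)H(a+b+c) / (H(a+b)H(b+c)H(c+a)) is a positive integer. -/
/-- The hyperfactorial `H(n) = ∏_{k=0}^{n-1} k!`. -/
def hyperfac (n : ℕ) : ℕ := ∏ k ∈ Finset.range n, Nat.factorial k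

open Finset

/-- Partial sums of floor division: `∑_{k<n} ⌊k/m⌋`. -/
def floorSum (m n : ℕ) : ℕ := ∑ k ∈ Finset.range n, k / m

lemma floorSum_step (m : ℕ) (hm : 0 < m) : ∀ n, floorSum m (n + m) = floorSum m n + n := by
  intro n
  induction n with
  | zero =>
    simp only [Nat.zero_add, Nat.add_zero, floorSum]
    rw [Finset.sum_eq_zero]
    · simp
    · intro k hk
      exact Nat.div_eq_of_lt (Finset.mem_range.mp hk)
  | succ n ih =>
    have h1 : n + 1 + m = (n + m) + 1 := by omega
    rw [h1]
    unfold floorSum at *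
    rw [Finset.sum_range_succ, Finset.sum_range_succ (fun k => k / m) n, ih]
    have : (n + m) / m = n / m + 1 := Nat.add_div_right n hm
    omega

lemma floorSum_of_le (m n : ℕ) (h : n ≤ m) : floorSum m n = 0 := by
  unfold floorSum
  apply Finset.sum_eq_zero
  intro k hk
  exact Nat.div_eq_of_lt (lt_of_lt_of_le (Finset.mem_range.mp hk) h)

lemma floorSum_val2 (m n : ℕ) (hm : 0 < m) (h : n ≤ 2 * m) : floorSum m n = n - m := by
  rcases le_or_gt n m with h1 | h1
  · rw [floorSum_of_le m n h1]; omega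
  · obtain ⟨n', rfl⟩ : ∃ n', n = n' + m := ⟨n - m, by omega⟩
    rw [floorSum_step m hm, floorSum_of_le m n' (by omega)]
    omega

lemma floorSum_val3 (m n : ℕ) (hm : 0 < m) (h : n ≤ 3 * m) :
    floorSum m n = (n - m) + (n - 2 * m) := by
  rcases le_or_gt n m with h1 | h1
  · rw [floorSum_of_le m n h1]; omega
  · obtain ⟨n', rfl⟩ : ∃ n', n = n' + m := ⟨n - m, by omega⟩
    rw [floorSum_step m hm, floorSum_val2 m n' hm (by omega)]
    omega

/-- The key combinatorial inequality for floor sums. -/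
lemma floorSum_key (m : ℕ) (hm : 0 < m) :
    ∀ s a b c, a + b + c ≤ s →
      floorSum m (a + b) + floorSum m (b + c) + floorSum m (c + a) ≤
        floorSum m a + floorSum m b + floorSum m c + floorSum m (a + b + c) := by
  intro s
  induction s with
  | zero =>
    intro a b c h
    obtain ⟨rfl, rfl, rfl⟩ : a = 0 ∧ b = 0 ∧ c = 0 := by omega
    simp
  | succ s ih =>
    intro a b c h
    by_cases hA : m ≤ a
    · obtain ⟨a', rfl⟩ : ∃ a', a = a' + m := ⟨a - m, by omega⟩
      have e1 : floorSum m (a' + m) = floorSum m a' + a' := floorSum_step m hm a'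
      have e2 : floorSum m (a' + m + b) = floorSum m (a' + b) + (a' + b) := by
        rw [show a' + m + b = (a' + b) + m by omega]; exact floorSum_step m hm _
      have e3 : floorSum m (c + (a' + m)) = floorSum m (c + a') + (c + a') := by
        rw [show c + (a' + m) = (c + a') + m by omega]; exact floorSum_step m hm _
      have e4 : floorSum m (a' + m + b + c) = floorSum m (a' + b + c) + (a' + b + c) := by
        rw [show a' + m + b + c = (a' + b + c) + m by omega]; exact floorSum_step m hm _
      have := ih a' b c (by omega)
      omega
    · by_cases hB : m ≤ b
      · obtain ⟨b', rfl⟩ : ∃ b', b = b' + m := ⟨b - m, by omega⟩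
        have e1 : floorSum m (b' + m) = floorSum m b' + b' := floorSum_step m hm b'
        have e2 : floorSum m (a + (b' + m)) = floorSum m (a + b') + (a + b') := by
          rw [show a + (b' + m) = (a + b') + m by omega]; exact floorSum_step m hm _
        have e3 : floorSum m (b' + m + c) = floorSum m (b' + c) + (b' + c) := by
          rw [show b' + m + c = (b' + c) + m by omega]; exact floorSum_step m hm _
        have e4 : floorSum m (a + (b' + m) + c) = floorSum m (a + b' + c) + (a + b' + c) := by
          rw [show a + (b' + m) + c = (a + b' + c) + m by omega]; exact floorSum_step m hm _
        have := ih a b' c (by omega)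
        omega
      · by_cases hC : m ≤ c
        · obtain ⟨c', rfl⟩ : ∃ c', c = c' + m := ⟨c - m, by omega⟩
          have e1 : floorSum m (c' + m) = floorSum m c' + c' := floorSum_step m hm c'
          have e2 : floorSum m (b + (c' + m)) = floorSum m (b + c') + (b + c') := by
            rw [show b + (c' + m) = (b + c') + m by omega]; exact floorSum_step m hm _
          have e3 : floorSum m (c' + m + a) = floorSum m (c' + a) + (c' + a) := by
            rw [show c' + m + a = (c' + a) + m by omega]; exact floorSum_step m hm _
          have e4 : floorSum m (a + b + (c' + m)) = floorSum m (a + b + c') + (a + b + c') := by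
            rw [show a + b + (c' + m) = (a + b + c') + m by omega]; exact floorSum_step m hm _
          have := ih a b c' (by omega)
          omega
        · push_neg at hA hB hC
          rw [floorSum_of_le m a (by omega), floorSum_of_le m b (by omega),
            floorSum_of_le m c (by omega),
            floorSum_val2 m (a + b) hm (by omega), floorSum_val2 m (b + c) hm (by omega),
            floorSum_val2 m (c + a) hm (by omega), floorSum_val3 m (a + b + c) hm (by omega)]
          omega

lemma hyperfac_ne_zero (n : ℕ) : hyperfac n ≠ 0 := by
  unfold hyperfac
  exact (Finset.prod_pos fun k _ => Nat.factorial_pos k).ne'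

lemma factorization_hyperfac (p : ℕ) (hp : p.Prime) (B n : ℕ) (hn : n < B) :
    (hyperfac n).factorization p = ∑ i ∈ Finset.Ico 1 B, floorSum (p ^ i) n := by
  haveI : Fact p.Prime := ⟨hp⟩
  unfold hyperfac
  rw [Nat.factorization_prod fun k _ => (Nat.factorial_pos k).ne']
  rw [Finsupp.finset_sum_apply]
  rw [Finset.sum_congr rfl (fun k hk => ?_), Finset.sum_comm]
  · rfl
  · rw [Nat.factorization_def _ hp]
    exact padicValNat_factorial
      (lt_of_le_of_lt (Nat.log_le_self p k) (lt_of_lt_of_le (Finset.mem_range.mp hk) (by omega)))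

/-- For positive integers `a, b, c`, the quotient
`H(a)H(b)H(c)H(a+b+c) / (H(a+b)H(b+c)H(c+a))` is a positive integer. -/
theorem hyperfac_quotient_pos_int (a b c : ℕ) (ha : 0 < a) (hb : 0 < b) (hc : 0 < c) :
    ∃ q : ℕ, 0 < q ∧
      hyperfac a * hyperfac b * hyperfac c * hyperfac (a + b + c) =
        q * (hyperfac (a + b) * hyperfac (b + c) * hyperfac (c + a)) := by
  have hM : hyperfac a * hyperfac b * hyperfac c * hyperfac (a + b + c) ≠ 0 :=
    mul_ne_zero (mul_ne_zero (mul_ne_zero (hyperfac_ne_zero a) (hyperfac_ne_zero b))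
      (hyperfac_ne_zero c)) (hyperfac_ne_zero _)
  have hN : hyperfac (a + b) * hyperfac (b + c) * hyperfac (c + a) ≠ 0 :=
    mul_ne_zero (mul_ne_zero (hyperfac_ne_zero _) (hyperfac_ne_zero _)) (hyperfac_ne_zero _)
  have hdvd : hyperfac (a + b) * hyperfac (b + c) * hyperfac (c + a) ∣
      hyperfac a * hyperfac b * hyperfac c * hyperfac (a + b + c) := by
    rw [← Nat.factorization_le_iff_dvd hN hM]
    rw [Finsupp.le_def]
    intro p
    by_cases hp : p.Prime
    · have hmul : ∀ x y : ℕ, x ≠ 0 → y ≠ 0 →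
          (x * y).factorization p = x.factorization p + y.factorization p := by
        intro x y hx hy
        rw [Nat.factorization_mul hx hy]
        rfl
      set B := a + b + c + 1 with hB
      rw [hmul _ _ (mul_ne_zero (hyperfac_ne_zero _) (hyperfac_ne_zero _)) (hyperfac_ne_zero _),
        hmul _ _ (hyperfac_ne_zero _) (hyperfac_ne_zero _),
        hmul _ _ (mul_ne_zero (mul_ne_zero (hyperfac_ne_zero _) (hyperfac_ne_zero _))
          (hyperfac_ne_zero _)) (hyperfac_ne_zero _),
        hmul _ _ (mul_ne_zero (hyperfac_ne_zero _) (hyperfac_ne_zero _)) (hyperfac_ne_zero _),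
        hmul _ _ (hyperfac_ne_zero _) (hyperfac_ne_zero _),
        factorization_hyperfac p hp B a (by omega),
        factorization_hyperfac p hp B b (by omega),
        factorization_hyperfac p hp B c (by omega),
        factorization_hyperfac p hp B (a + b) (by omega),
        factorization_hyperfac p hp B (b + c) (by omega),
        factorization_hyperfac p hp B (c + a) (by omega),
        factorization_hyperfac p hp B (a + b + c) (by omega),
        ← Finset.sum_add_distrib, ← Finset.sum_add_distrib, ← Finset.sum_add_distrib,
        ← Finset.sum_add_distrib,
        ← Finset.sum_add_distrib]
      apply Finset.sum_le_sum
      intro i _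
      exact floorSum_key (p ^ i) (pow_pos hp.pos i) (a + b + c) a b c le_rfl
    · simp [Nat.factorization_eq_zero_of_not_prime _ hp]
  obtain ⟨q, hq⟩ := hdvd
  refine ⟨q, ?_, by rw [hq]; ring⟩
  rcases Nat.eq_zero_or_pos q with rfl | hq'
  · rw [mul_zero] at hq; exact absurd hq hM
  · exact hq'
end

section
/- For nonnegative integers a, b, c, MacMahon's plane partition formula satisfies PP(a,b,c) = ∏_{i=1}^{a} ∏_{j=1}^{b} ∏_{k=1}^{c} (i+j+k-1)/(i+j+k-2), where PP(a,b,c) = H(a)H(b)H(c)H(a+b+c)/(H(a+b)H(b+c)H(c+a)) and H is the hyperfactorial. -/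
/-- The hyperfactorial `H(n) = ∏_{k=0}^{n-1} k!`, as a rational number. -/
def hyperfacQ (n : ℕ) : ℚ := ∏ k ∈ Finset.range n, (Nat.factorial k : ℚ)

/-- MacMahon's box formula `PP(a,b,c)`. -/
def PP (a b c : ℕ) : ℚ :=
  hyperfacQ a * hyperfacQ b * hyperfacQ c * hyperfacQ (a + b + c) /
    (hyperfacQ (a + b) * hyperfacQ (b + c) * hyperfacQ (c + a))

lemma factQ_ne_zero (n : ℕ) : (Nat.factorial n : ℚ) ≠ 0 := by
  exact_mod_cast n.factorial_ne_zero

lemma hyperfacQ_ne_zero (n : ℕ) : hyperfacQ n ≠ 0 :=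
  Finset.prod_ne_zero_iff.mpr fun k _ => factQ_ne_zero k

lemma hyperfacQ_succ (n : ℕ) : hyperfacQ (n + 1) = hyperfacQ n * (Nat.factorial n : ℚ) := by
  simp [hyperfacQ, Finset.prod_range_succ]

/-- telescoping in one variable -/
lemma tele1 (m n : ℕ) :
    ∏ j ∈ Finset.range n, ((m : ℚ) + j + 2) / ((m : ℚ) + j + 1)
      = ((m : ℚ) + n + 1) / ((m : ℚ) + 1) := by
  induction n with
  | zero =>
      simp only [Finset.range_zero, Finset.prod_empty, Nat.cast_zero, add_zero]
      rw [div_self]; positivity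
  | succ n ih =>
      rw [Finset.prod_range_succ, ih]
      have h1 : (m : ℚ) + n + 1 ≠ 0 := by positivity
      have h2 : (m : ℚ) + 1 ≠ 0 := by positivity
      push_cast
      field_simp
      ring

lemma tele2 (a b c : ℕ) :
    ∏ i ∈ Finset.range a, ((i : ℚ) + b + c + 1) / ((i : ℚ) + c + 1)
      = ((Nat.factorial c : ℚ) * (Nat.factorial (a + b + c) : ℚ)) /
        ((Nat.factorial (b + c) : ℚ) * (Nat.factorial (a + c) : ℚ)) := by
  induction a with
  | zero =>
      simp only [Finset.range_zero, Finset.prod_empty]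
      rw [eq_comm, div_eq_one_iff_eq (by positivity)]
      push_cast [Nat.zero_add]
      ring
  | succ a ih =>
      rw [Finset.prod_range_succ, ih]
      have h1 := factQ_ne_zero (b + c)
      have h2 := factQ_ne_zero (a + c)
      have h3 : (a : ℚ) + c + 1 ≠ 0 := by positivity
      have e1 : a + 1 + b + c = (a + b + c) + 1 := by ring
      have e2 : a + 1 + c = (a + c) + 1 := by ring
      rw [e1, e2, Nat.factorial_succ, Nat.factorial_succ]
      push_cast
      field_simp

/-- MacMahon's triple product formula:
`PP(a,b,c) = ∏_{i=1}^{a} ∏_{j=1}^{b} ∏_{k=1}^{c} (i+j+k-1)/(i+j+k-2)`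
(indices shifted so that `i, j, k` range over `0, …, a-1` etc.). -/
theorem PP_eq_triple_product (a b c : ℕ) :
    PP a b c =
      ∏ i ∈ Finset.range a, ∏ j ∈ Finset.range b, ∏ k ∈ Finset.range c,
        ((i : ℚ) + j + k + 2) / ((i : ℚ) + j + k + 1) := by
  induction c with
  | zero =>
      simp only [Finset.range_zero, Finset.prod_empty, Finset.prod_const_one]
      unfold PP
      have h1 := hyperfacQ_ne_zero a
      have h2 := hyperfacQ_ne_zero b
      have h3 := hyperfacQ_ne_zero (a + b)
      simp only [Nat.add_zero, Nat.zero_add, hyperfacQ]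
      simp only [Finset.range_zero, Finset.prod_empty]
      field_simp [hyperfacQ] at *
  | succ c ih =>
      have key : ∀ i j : ℕ,
          ∏ k ∈ Finset.range (c + 1), ((i : ℚ) + j + k + 2) / ((i : ℚ) + j + k + 1)
            = (∏ k ∈ Finset.range c, ((i : ℚ) + j + k + 2) / ((i : ℚ) + j + k + 1)) *
              (((i : ℚ) + j + c + 2) / ((i : ℚ) + j + c + 1)) := by
        intro i j; rw [Finset.prod_range_succ]
      simp only [key, Finset.prod_mul_distrib]
      rw [← ih]
      -- the extra factor: ∏ i ∏ j (i+j+c+2)/(i+j+c+1)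
      have extra : ∏ i ∈ Finset.range a, ∏ j ∈ Finset.range b,
          ((i : ℚ) + j + c + 2) / ((i : ℚ) + j + c + 1)
            = ((Nat.factorial c : ℚ) * (Nat.factorial (a + b + c) : ℚ)) /
              ((Nat.factorial (b + c) : ℚ) * (Nat.factorial (a + c) : ℚ)) := by
        have inner : ∀ i : ℕ, ∏ j ∈ Finset.range b,
            ((i : ℚ) + j + c + 2) / ((i : ℚ) + j + c + 1)
              = ((i : ℚ) + b + c + 1) / ((i : ℚ) + c + 1) := by
          intro i
          have h := tele1 (i + c) b
          push_cast at h
          calc ∏ j ∈ Finset.range b, ((i : ℚ) + j + c + 2) / ((i : ℚ) + j + c + 1)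
              = ∏ j ∈ Finset.range b, ((i : ℚ) + c + j + 2) / ((i : ℚ) + c + j + 1) := by
                apply Finset.prod_congr rfl
                intro j _
                ring_nf
            _ = ((i : ℚ) + c + b + 1) / ((i : ℚ) + c + 1) := h
            _ = ((i : ℚ) + b + c + 1) / ((i : ℚ) + c + 1) := by ring_nf
        calc ∏ i ∈ Finset.range a, ∏ j ∈ Finset.range b,
              ((i : ℚ) + j + c + 2) / ((i : ℚ) + j + c + 1)
            = ∏ i ∈ Finset.range a, ((i : ℚ) + b + c + 1) / ((i : ℚ) + c + 1) :=
              Finset.prod_congr rfl fun i _ => inner i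
          _ = _ := tele2 a b c
      rw [extra]
      -- now relate PP a b (c+1) to PP a b c
      unfold PP
      have e1 : a + b + (c + 1) = (a + b + c) + 1 := by ring
      have e2 : b + (c + 1) = (b + c) + 1 := by ring
      have e3 : (c + 1) + a = (c + a) + 1 := by ring
      rw [e1, e2, e3, hyperfacQ_succ, hyperfacQ_succ, hyperfacQ_succ, hyperfacQ_succ]
      have h1 := hyperfacQ_ne_zero (a + b)
      have h2 := hyperfacQ_ne_zero (b + c)
      have h3 := hyperfacQ_ne_zero (c + a)
      have h4 := factQ_ne_zero (b + c)
      have h5 := factQ_ne_zero (c + a)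
      have h6 := factQ_ne_zero (a + c)
      have hca : c + a = a + c := by ring
      rw [hca]
      field_simp
end

section
/- Region-splitting for perfect matchings: Let G be a finite bipartite graph with parts V₁, V₂ and |V₁| = |V₂|, and let Q be an induced subgraph of G on vertex set W such that |W ∩ V₁| = |W ∩ V₂| and every edge of G joining a vertex of W to a vertex outside W has its W-endpoint in V₁ (one fixed side). Then the number of perfect matchings of G equals the number of perfect matchings of Q times the number of perfect matchings of G − W. -/
/-- The number of perfect matchings of a simple graph. -/
noncomputable def pmCount {V : Type*} (G : SimpleGraph V) : ℕ :=
  Nat.card {M : G.Subgraph // M.IsPerfectMatching}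

section Aux

variable {V : Type*} (G : SimpleGraph V) (s : Set V)

/-- Restriction of a subgraph to an induced subgraph on `s`. -/
def restrictSub (M : G.Subgraph) : (G.induce s).Subgraph where
  verts := Set.univ
  Adj a b := M.Adj a b
  adj_sub h := M.adj_sub h
  edge_vert _ := Set.mem_univ _
  symm := ⟨fun a b h => M.symm.symm _ _ h⟩

lemma restrictSub_isPM (M : G.Subgraph) (hM : M.IsPerfectMatching)
    (hcl : ∀ a b, M.Adj a b → a ∈ s → b ∈ s) :
    (restrictSub G s M).IsPerfectMatching := by
  constructor
  · intro v _
    obtain ⟨w, hw, hu⟩ := hM.1 (hM.2 (v : V))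
    refine ⟨⟨w, hcl v w hw v.2⟩, hw, ?_⟩
    intro y hy
    exact Subtype.ext (hu (y : V) hy)
  · intro v; exact Set.mem_univ v

/-- Gluing a subgraph of `G.induce s` with a subgraph of `G.induce sᶜ`. -/
def glueSub (M₁ : (G.induce s).Subgraph) (M₂ : (G.induce (sᶜ : Set V)).Subgraph) :
    G.Subgraph where
  verts := Set.univ
  Adj a b := (∃ (ha : a ∈ s) (hb : b ∈ s), M₁.Adj ⟨a, ha⟩ ⟨b, hb⟩) ∨
             (∃ (ha : a ∉ s) (hb : b ∉ s), M₂.Adj ⟨a, ha⟩ ⟨b, hb⟩)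
  adj_sub h := by
    rcases h with ⟨ha, hb, h⟩ | ⟨ha, hb, h⟩
    · exact M₁.adj_sub h
    · exact M₂.adj_sub h
  edge_vert _ := Set.mem_univ _
  symm := by
    refine ⟨?_⟩
    intro a b h
    rcases h with ⟨ha, hb, h⟩ | ⟨ha, hb, h⟩
    · exact Or.inl ⟨hb, ha, M₁.symm.symm _ _ h⟩
    · exact Or.inr ⟨hb, ha, M₂.symm.symm _ _ h⟩

lemma glueSub_isPM (M₁ : (G.induce s).Subgraph) (M₂ : (G.induce (sᶜ : Set V)).Subgraph)
    (h₁ : M₁.IsPerfectMatching) (h₂ : M₂.IsPerfectMatching) :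
    (glueSub G s M₁ M₂).IsPerfectMatching := by
  constructor
  · intro v _
    by_cases hv : v ∈ s
    · obtain ⟨w, hw, hu⟩ := h₁.1 (h₁.2 ⟨v, hv⟩)
      refine ⟨(w : V), Or.inl ⟨hv, w.2, hw⟩, ?_⟩
      intro y hy
      rcases hy with ⟨ha, hb, h⟩ | ⟨ha, hb, h⟩
      · exact congrArg Subtype.val (hu ⟨y, hb⟩ h)
      · exact absurd hv ha
    · obtain ⟨w, hw, hu⟩ := h₂.1 (h₂.2 ⟨v, hv⟩)
      refine ⟨(w : V), Or.inr ⟨hv, w.2, hw⟩, ?_⟩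
      intro y hy
      rcases hy with ⟨ha, hb, h⟩ | ⟨ha, hb, h⟩
      · exact absurd ha hv
      · exact congrArg Subtype.val (hu ⟨y, hb⟩ h)
  · intro v; exact Set.mem_univ v

end Aux

/-- Region-splitting for perfect matchings: if `Q = G[W]` is balanced and every edge of `G`
from `W` to its complement has its `W`-endpoint in `V₁`, then the perfect matchings of `G`
factor as pairs of perfect matchings of `G[W]` and `G[Wᶜ]`. -/
theorem region_splitting {V : Type*} [Fintype V] [DecidableEq V]
    (G : SimpleGraph V) (V₁ V₂ : Set V)
    (hpart : ∀ x, x ∈ V₁ ↔ x ∉ V₂)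
    (hbip : ∀ a b, G.Adj a b → (a ∈ V₁ ∧ b ∈ V₂) ∨ (a ∈ V₂ ∧ b ∈ V₁))
    (hcard : V₁.ncard = V₂.ncard)
    (W : Set V)
    (hWbal : (W ∩ V₁).ncard = (W ∩ V₂).ncard)
    (hbdry : ∀ a b, G.Adj a b → a ∈ W → b ∉ W → a ∈ V₁) :
    pmCount G = pmCount (G.induce W) * pmCount (G.induce (Wᶜ : Set V)) := by
  classical
  -- Key: a perfect matching of G has no edge crossing W / Wᶜ
  have key : ∀ (M : G.Subgraph), M.IsPerfectMatching →
      ∀ a b, M.Adj a b → a ∈ W → b ∈ W := by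
    intro M hMpm
    obtain ⟨hM, hS⟩ := hMpm
    -- partner function
    set f : V → V := fun v => (hM (hS v)).exists.choose with hf
    have hadj : ∀ v, M.Adj v (f v) := fun v => (hM (hS v)).exists.choose_spec
    have huniq : ∀ v u, M.Adj v u → u = f v := fun v u h => (hM (hS v)).unique h (hadj v)
    have finv : ∀ v, f (f v) = v := fun v =>
      (hM (hS (f v))).unique (hadj (f v)) ((hadj v).symm)
    have hmaps : ∀ v ∈ W ∩ V₂, f v ∈ W ∩ V₁ := by
      intro v hv
      have hG : G.Adj v (f v) := M.adj_sub (hadj v)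
      have hv2 : v ∈ V₂ := hv.2
      have hv1 : v ∉ V₁ := fun h => (hpart v).mp h hv2
      have hfv1 : f v ∈ V₁ := by
        rcases hbip v (f v) hG with h | h
        · exact absurd h.1 hv1
        · exact h.2
      by_cases hfW : f v ∈ W
      · exact ⟨hfW, hfv1⟩
      · exact absurd (hbdry v (f v) hG hv.1 hfW) hv1
    have hinj : Set.InjOn f (W ∩ V₂) := by
      intro x _ y _ h
      rw [← finv x, h, finv y]
    have himg : f '' (W ∩ V₂) = W ∩ V₁ := by
      refine Set.eq_of_subset_of_ncard_le ?_ ?_ (Set.toFinite _)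
      · intro x hx
        obtain ⟨v, hv, rfl⟩ := hx
        exact hmaps v hv
      · rw [Set.ncard_image_of_injOn hinj, ← hWbal]
    intro a b hab haW
    have hb : b = f a := huniq a b hab
    by_cases hav : a ∈ V₂
    · have := hmaps a ⟨haW, hav⟩
      rw [hb]; exact this.1
    · have ha1 : a ∈ V₁ := (hpart a).mpr hav
      have : a ∈ f '' (W ∩ V₂) := himg.symm ▸ (⟨haW, ha1⟩ : a ∈ W ∩ V₁)
      obtain ⟨v, hv, hva⟩ := this
      have : f a = v := by rw [← hva, finv]
      rw [hb, this]; exact hv.1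
  have keyc : ∀ (M : G.Subgraph), M.IsPerfectMatching →
      ∀ a b, M.Adj a b → a ∈ (Wᶜ : Set V) → b ∈ (Wᶜ : Set V) := by
    intro M hM a b hab ha hb
    exact ha (key M hM b a hab.symm hb)
  -- the equivalence
  let e : {M : G.Subgraph // M.IsPerfectMatching} ≃
      ({M : (G.induce W).Subgraph // M.IsPerfectMatching} ×
       {M : (G.induce (Wᶜ : Set V)).Subgraph // M.IsPerfectMatching}) :=
    { toFun := fun M =>
        (⟨restrictSub G W M.1, restrictSub_isPM G W M.1 M.2 (key M.1 M.2)⟩,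
         ⟨restrictSub G (Wᶜ : Set V) M.1, restrictSub_isPM G (Wᶜ : Set V) M.1 M.2
            (keyc M.1 M.2)⟩)
      invFun := fun p =>
        ⟨glueSub G W p.1.1 p.2.1, glueSub_isPM G W p.1.1 p.2.1 p.1.2 p.2.2⟩
      left_inv := by
        rintro ⟨M, hM⟩
        apply Subtype.ext
        apply SimpleGraph.Subgraph.ext
        · exact (SimpleGraph.Subgraph.isSpanning_iff.mp hM.2).symm
        · funext a b
          apply propext
          constructor
          · rintro (⟨ha, hb, h⟩ | ⟨ha, hb, h⟩) <;> exact h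
          · intro h
            by_cases ha : a ∈ W
            · exact Or.inl ⟨ha, key M hM a b h ha, h⟩
            · exact Or.inr ⟨ha, fun hb => ha (key M hM b a h.symm hb), h⟩
      right_inv := by
        rintro ⟨⟨M₁, h₁⟩, ⟨M₂, h₂⟩⟩
        refine Prod.ext ?_ ?_
        · apply Subtype.ext
          apply SimpleGraph.Subgraph.ext
          · exact (SimpleGraph.Subgraph.isSpanning_iff.mp h₁.2).symm
          · funext a b
            apply propext
            constructor
            · rintro (⟨ha, hb, h⟩ | ⟨ha, hb, h⟩)
              · exact h
              · exact absurd a.2 ha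
            · intro h
              exact Or.inl ⟨a.2, b.2, h⟩
        · apply Subtype.ext
          apply SimpleGraph.Subgraph.ext
          · exact (SimpleGraph.Subgraph.isSpanning_iff.mp h₂.2).symm
          · funext a b
            apply propext
            constructor
            · rintro (⟨ha, hb, h⟩ | ⟨ha, hb, h⟩)
              · exact absurd ha a.2
              · exact h
            · intro h
              exact Or.inr ⟨a.2, b.2, h⟩ }
  simp only [pmCount]
  rw [← Nat.card_prod]
  exact Nat.card_congr e
end

section
/- Dodgson-condensation consequence for 2×2 blocks: Let M be an n×n matrix over a commutative ring with n ≥ 2, and for indices i,j let M(i|j) denote the matrix with row i and column j removed and M(i,i'|j,j') with rows i,i' and columns j,j' removed. Then det(M) · det(M(1,n|1,n)) = det(M(1|1)) · det(M(n|n)) − det(M(1|n)) · det(M(n|1)). -/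
open Matrix

namespace JDaux

variable {R : Type*} [CommRing R]

/-- Embedding `Fin 2 ⊕ Fin n → Fin (n+2)`: `inl 0 ↦ 0`, `inl 1 ↦ last`, `inr j ↦ j+1`. -/
def emb (n : ℕ) : Fin 2 ⊕ Fin n → Fin (n + 2)
  | .inl a => if a = 0 then 0 else Fin.last (n + 1)
  | .inr j => j.succ.castSucc

lemma emb_inl_zero (n : ℕ) : emb n (.inl 0) = 0 := rfl

lemma emb_inl_one (n : ℕ) : emb n (.inl 1) = Fin.last (n + 1) := rfl

lemma emb_inr (n : ℕ) (j : Fin n) : emb n (.inr j) = j.succ.castSucc := rfl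

lemma emb_inr_ne_zero {n : ℕ} (j : Fin n) : emb n (.inr j) ≠ 0 := by
  simp [emb, Fin.ext_iff]

lemma emb_inr_ne_last {n : ℕ} (j : Fin n) : emb n (.inr j) ≠ Fin.last (n + 1) := by
  have := j.isLt
  simp [emb, Fin.ext_iff]; omega

lemma emb_inl_cases {n : ℕ} (a : Fin 2) :
    emb n (.inl a) = 0 ∨ emb n (.inl a) = Fin.last (n + 1) := by
  fin_cases a <;> simp [emb]

lemma emb_bij (n : ℕ) : Function.Bijective (emb n) := by
  rw [Fintype.bijective_iff_injective_and_card]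
  refine ⟨?_, by simp only [Fintype.card_sum, Fintype.card_fin]; omega⟩
  intro a b h
  have h' := congrArg Fin.val h
  rcases a with a | a <;> rcases b with b | b
  · fin_cases a <;> fin_cases b <;> simp_all [emb, Fin.ext_iff]
  · exact absurd h.symm (emb_inl_cases a |>.elim
      (fun e => e ▸ emb_inr_ne_zero b) (fun e => e ▸ emb_inr_ne_last b))
  · exact absurd h (emb_inl_cases b |>.elim
      (fun e => e ▸ emb_inr_ne_zero a) (fun e => e ▸ emb_inr_ne_last a))
  · simp only [emb, Fin.coe_castSucc, Fin.val_succ] at h'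
    exact congrArg Sum.inr (Fin.ext (by omega))

/-- The equivalence used to reindex. -/
noncomputable def embE (n : ℕ) : Fin 2 ⊕ Fin n ≃ Fin (n + 2) :=
  Equiv.ofBijective _ (emb_bij n)

lemma embE_apply (n : ℕ) (x) : embE n x = emb n x := rfl

/-- The auxiliary matrix: adjugate columns at positions `0` and `last`, basis vectors elsewhere. -/
def X {n : ℕ} (M : Matrix (Fin (n + 2)) (Fin (n + 2)) R) :
    Matrix (Fin (n + 2)) (Fin (n + 2)) R :=
  Matrix.of fun i j =>
    if j = 0 ∨ j = Fin.last (n + 1) then adjugate M i j else if i = j then 1 else 0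

lemma det_X {n : ℕ} (M : Matrix (Fin (n + 2)) (Fin (n + 2)) R) :
    (X M).det =
      adjugate M 0 0 * adjugate M (Fin.last (n + 1)) (Fin.last (n + 1)) -
      adjugate M 0 (Fin.last (n + 1)) * adjugate M (Fin.last (n + 1)) 0 := by
  have h := det_submatrix_equiv_self (embE n) (X M)
  rw [← h]
  have hb : (X M).submatrix (embE n) (embE n) =
      fromBlocks (fun a b => adjugate M (emb n (.inl a)) (emb n (.inl b))) 0
        (fun j b => adjugate M (emb n (.inr j)) (emb n (.inl b))) 1 := by
    ext i j
    rcases i with a | i <;> rcases j with b | j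
    · rcases emb_inl_cases (n := n) b with e | e <;>
        simp [X, fromBlocks, embE_apply, e]
    · have h1 := emb_inr_ne_zero (n := n) j
      have h2 := emb_inr_ne_last (n := n) j
      have h3 : emb n (.inl a) ≠ emb n (.inr j) := fun e => by
        cases (emb_bij n).injective e
      simp [X, fromBlocks, embE_apply, h1, h2, h3]
    · rcases emb_inl_cases (n := n) b with e | e <;>
        simp [X, fromBlocks, embE_apply, e]
    · have h1 := emb_inr_ne_zero (n := n) j
      have h2 := emb_inr_ne_last (n := n) j
      simp [X, fromBlocks, embE_apply, h1, h2, one_apply,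
        (emb_bij n).injective.eq_iff]
  rw [hb]; erw [det_fromBlocks_zero₁₂, det_one, mul_one, det_fin_two]
  simp [embE_apply, emb_inl_zero, emb_inl_one, emb]

lemma mulX_apply {n : ℕ} (M : Matrix (Fin (n + 2)) (Fin (n + 2)) R) (i j) :
    (M * X M) i j =
      if j = 0 ∨ j = Fin.last (n + 1) then M.det * (if i = j then 1 else 0) else M i j := by
  rw [mul_apply]
  by_cases h : j = 0 ∨ j = Fin.last (n + 1)
  · have : ∀ k, X M k j = adjugate M k j := fun k => by simp [X, h]
    simp_rw [this]
    rw [← mul_apply, mul_adjugate, Matrix.smul_apply, one_apply, if_pos h, smul_eq_mul]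
  · have : ∀ k, X M k j = if k = j then 1 else 0 := fun k => by simp [X, h]
    simp_rw [this, mul_ite, mul_one, mul_zero]
    rw [if_neg h, Finset.sum_ite_eq' _ j, if_pos (Finset.mem_univ _)]

lemma det_mulX {n : ℕ} (M : Matrix (Fin (n + 2)) (Fin (n + 2)) R) :
    (M * X M).det = M.det ^ 2 *
      (M.submatrix (fun i : Fin n => (i.succ.castSucc : Fin (n + 2)))
        (fun j : Fin n => (j.succ.castSucc : Fin (n + 2)))).det := by
  have h := det_submatrix_equiv_self (embE n) (M * X M)
  rw [← h]
  have hb : (M * X M).submatrix (embE n) (embE n) =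
      fromBlocks (M.det • (1 : Matrix (Fin 2) (Fin 2) R))
        (fun a j => M (emb n (.inl a)) (emb n (.inr j))) 0
        (M.submatrix (fun i : Fin n => (i.succ.castSucc : Fin (n + 2)))
          (fun j : Fin n => (j.succ.castSucc : Fin (n + 2)))) := by
    ext i j
    rcases i with a | i <;> rcases j with b | j
    · show (M * X M) (emb n (.inl a)) (emb n (.inl b)) =
        (M.det • (1 : Matrix (Fin 2) (Fin 2) R)) a b
      rw [mulX_apply, if_pos (emb_inl_cases b)]
      simp [one_apply, (emb_bij n).injective.eq_iff]
    · show (M * X M) (emb n (.inl a)) (emb n (.inr j)) = M (emb n (.inl a)) (emb n (.inr j))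
      rw [mulX_apply,
        if_neg (by push_neg; exact ⟨emb_inr_ne_zero j, emb_inr_ne_last j⟩)]
    · show (M * X M) (emb n (.inr i)) (emb n (.inl b)) = (0 : Matrix (Fin n) (Fin 2) R) i b
      have h3 : emb n (.inr i) ≠ emb n (.inl b) := fun e => by
        cases (emb_bij n).injective e
      rw [mulX_apply, if_pos (emb_inl_cases b)]
      simp [h3]
    · show (M * X M) (emb n (.inr i)) (emb n (.inr j)) = M i.succ.castSucc j.succ.castSucc
      rw [mulX_apply,
        if_neg (by push_neg; exact ⟨emb_inr_ne_zero j, emb_inr_ne_last j⟩)]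
      rfl
  rw [hb]; erw [det_fromBlocks_zero₂₁]; rw [det_smul, det_one, mul_one, Fintype.card_fin]

/-- The key identity, valid over any commutative ring (with the extra factor `det M`). -/
lemma key {n : ℕ} (M : Matrix (Fin (n + 2)) (Fin (n + 2)) R) :
    M.det * (M.det *
      (M.submatrix (fun i : Fin n => (i.succ.castSucc : Fin (n + 2)))
        (fun j : Fin n => (j.succ.castSucc : Fin (n + 2)))).det) =
    M.det * ((M.submatrix Fin.succ Fin.succ).det * (M.submatrix Fin.castSucc Fin.castSucc).det -
      (M.submatrix Fin.succ Fin.castSucc).det * (M.submatrix Fin.castSucc Fin.succ).det) := by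
  have h1 : (M * X M).det = M.det * (X M).det := det_mul _ _
  rw [det_mulX, det_X] at h1
  have hadj : ∀ i j : Fin (n + 2), adjugate M i j =
      (-1 : R) ^ (j + i : ℕ) * det (M.submatrix j.succAbove i.succAbove) :=
    fun i j => adjugate_fin_succ_eq_det_submatrix M i j
  rw [hadj, hadj, hadj, hadj] at h1
  have hss : ((-1 : R)) ^ ((n + 1) + (n + 1)) = 1 := (Even.add_self (n + 1)).neg_one_pow
  have hs2 : ((-1 : R)) ^ (n + 1) * ((-1 : R)) ^ (n + 1) = 1 := by
    rw [← pow_add]; exact hss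
  simp only [Fin.val_zero, Fin.val_last, Fin.succAbove_zero, Fin.succAbove_last,
    Nat.add_zero, Nat.zero_add, pow_zero, one_mul, hss] at h1
  linear_combination h1 - M.det * ((M.submatrix Fin.succ Fin.castSucc).det *
    (M.submatrix Fin.castSucc Fin.succ).det) * hs2

end JDaux

/-- The Jacobi–Desnanot identity (Dodgson condensation):
`det(M) · det(M(1,n|1,n)) = det(M(1|1)) · det(M(n|n)) − det(M(1|n)) · det(M(n|1))`,
for an `(n+2) × (n+2)` matrix over a commutative ring, where the minors are obtained by
deleting the indicated first/last rows and columns. -/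
theorem jacobi_desnanot {R : Type*} [CommRing R] (n : ℕ)
    (M : Matrix (Fin (n + 2)) (Fin (n + 2)) R) :
    M.det *
      (M.submatrix (fun i : Fin n => (i.succ.castSucc : Fin (n + 2)))
        (fun j : Fin n => (j.succ.castSucc : Fin (n + 2)))).det =
    (M.submatrix Fin.succ Fin.succ).det * (M.submatrix Fin.castSucc Fin.castSucc).det -
    (M.submatrix Fin.succ Fin.castSucc).det * (M.submatrix Fin.castSucc Fin.succ).det := by
  -- Work with the generic matrix over a polynomial ring, where `det` is a nonzerodivisor,
  -- then specialize.
  set P := MvPolynomial (Fin (n + 2) × Fin (n + 2)) ℤ with hPdef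
  set G : Matrix (Fin (n + 2)) (Fin (n + 2)) P :=
    Matrix.of fun i j => MvPolynomial.X (i, j) with hGdef
  have hG0 : G.det ≠ 0 := by
    intro h
    have h2 := congrArg (MvPolynomial.eval
      (fun p : Fin (n + 2) × Fin (n + 2) => if p.1 = p.2 then (1 : ℤ) else 0)) h
    rw [map_zero, RingHom.map_det, RingHom.mapMatrix_apply] at h2
    have hone : G.map (MvPolynomial.eval
        (fun p : Fin (n + 2) × Fin (n + 2) => if p.1 = p.2 then (1 : ℤ) else 0)) =
        (1 : Matrix (Fin (n + 2)) (Fin (n + 2)) ℤ) := by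
      ext i j
      simp [hGdef, Matrix.map_apply, Matrix.one_apply]
    rw [hone, det_one] at h2
    exact one_ne_zero h2
  have hP : G.det *
      (G.submatrix (fun i : Fin n => (i.succ.castSucc : Fin (n + 2)))
        (fun j : Fin n => (j.succ.castSucc : Fin (n + 2)))).det =
      (G.submatrix Fin.succ Fin.succ).det * (G.submatrix Fin.castSucc Fin.castSucc).det -
      (G.submatrix Fin.succ Fin.castSucc).det * (G.submatrix Fin.castSucc Fin.succ).det :=
    mul_left_cancel₀ hG0 (JDaux.key G)
  set φ : P →+* R := (MvPolynomial.aeval fun p : Fin (n + 2) × Fin (n + 2) =>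
    M p.1 p.2 : P →ₐ[ℤ] R).toRingHom with hφdef
  have hM : G.map φ = M := by
    ext i j
    simp only [hGdef, hφdef, Matrix.map_apply, Matrix.of_apply,
      AlgHom.toRingHom_eq_coe, RingHom.coe_coe]
    exact MvPolynomial.aeval_X _ _
  have hsub : ∀ {k : ℕ} (r c : Fin k → Fin (n + 2)),
      φ (G.submatrix r c).det = (M.submatrix r c).det := by
    intro k r c
    rw [RingHom.map_det, RingHom.mapMatrix_apply, ← Matrix.submatrix_map, hM]
  have h2 := congrArg φ hP
  rw [_root_.map_mul, map_sub, _root_.map_mul, _root_.map_mul, RingHom.map_det, RingHom.mapMatrix_apply, hM,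
    hsub, hsub, hsub, hsub, hsub] at h2
  exact h2
end

section
/- Hyperfactorial quotient identity: for all nonnegative integers m and n, H(m+n) / (H(m) · H(n)) = ∏_{k=0}^{n-1} (m+k)! / k!, where H is the hyperfactorial H(t) = ∏_{k=0}^{t-1} k!. In particular H(m)·H(n) divides H(m+n) in the integers. -/
lemma hyperfac_add (m n : ℕ) :
    hyperfac (m + n) = hyperfac m * ∏ k ∈ Finset.range n, Nat.factorial (m + k) := by
  simp [hyperfac, Finset.prod_range_add]

lemma hyperfacQ_pos (n : ℕ) : 0 < hyperfacQ n := by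
  apply Finset.prod_pos
  intro i _
  exact_mod_cast Nat.factorial_pos i

/-- Hyperfactorial quotient identity: `H(m+n)/(H(m)·H(n)) = ∏_{k=0}^{n-1} (m+k)!/k!`,
and in particular `H(m)·H(n)` divides `H(m+n)` in the integers. -/
theorem hyperfac_quotient_identity (m n : ℕ) :
    hyperfacQ (m + n) / (hyperfacQ m * hyperfacQ n) =
      ∏ k ∈ Finset.range n, ((Nat.factorial (m + k) : ℚ) / (Nat.factorial k : ℚ)) ∧
    (hyperfac m * hyperfac n) ∣ hyperfac (m + n) := by
  constructor
  · rw [Finset.prod_div_distrib]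
    have h : hyperfacQ (m + n) = hyperfacQ m * ∏ k ∈ Finset.range n, (Nat.factorial (m + k) : ℚ) := by
      simp [hyperfacQ, Finset.prod_range_add]
    rw [h]
    have hm := (hyperfacQ_pos m).ne'
    have hn := (hyperfacQ_pos n).ne'
    rw [show (∏ k ∈ Finset.range n, (Nat.factorial k : ℚ)) = hyperfacQ n from rfl]
    field_simp
  · rw [hyperfac_add]
    exact mul_dvd_mul_left (hyperfac m)
      (Finset.prod_dvd_prod_of_dvd _ _ fun k _ =>
        Nat.factorial_dvd_factorial (Nat.le_add_left k m))
end
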